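/- Let $G$ be a group satisfying condition (C), let $N \trianglelefteq G$ be a normal subgroup with the unique-roots property, let $g \in G$ have infinite order, and let $n \ge 1$ be an integer with $g^n \in N$. Then the commensurator $N_G[\langle g \rangle] = \{x \in G : x \langle g \rangle x^{-1} \cap \langle g \rangle \text{ is infinite}\}$ equals the normalizer $N_G(\langle g^n \rangle)$ of the cyclic subgroup generated by $g^n$. -/

import Mathlib

private lemma mem_normalizer_of_conj_eq_zpow {G : Type*} [Group G] (x u : G) (ε : ℤ)
    (hε : ε * ε = 1) (h : x * u * x⁻¹ = u ^ ε) :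
    x ∈ Subgroup.normalizer (Subgroup.zpowers u : Set G) := by
  have h1 : (x⁻¹ * u * x) ^ ε = u := by
    have h2 : (x⁻¹ * u * x⁻¹⁻¹) ^ ε = x⁻¹ * u ^ ε * x⁻¹⁻¹ := conj_zpow
    rw [inv_inv] at h2
    rw [h2, ← h]
    group
  have hinv : x⁻¹ * u * x = u ^ ε := by
    calc x⁻¹ * u * x = ((x⁻¹ * u * x) ^ ε) ^ ε := by rw [← zpow_mul, hε, zpow_one]
      _ = u ^ ε := by rw [h1]
  rw [Subgroup.mem_normalizer_iff]
  intro h'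
  constructor
  · rintro ⟨m, rfl⟩
    refine ⟨ε * m, ?_⟩
    show u ^ (ε * m) = x * u ^ m * x⁻¹
    rw [zpow_mul, ← h, conj_zpow]
  · rintro ⟨m, hm⟩
    have hm' : u ^ m = x * h' * x⁻¹ := hm
    have hh : h' = x⁻¹ * u ^ m * x := by
      rw [hm']; group
    refine ⟨ε * m, ?_⟩
    show u ^ (ε * m) = h'
    have h3 : (x⁻¹ * u * x⁻¹⁻¹) ^ m = x⁻¹ * u ^ m * x⁻¹⁻¹ := conj_zpow
    rw [inv_inv] at h3
    rw [zpow_mul, ← hinv, h3, hh]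

/-- Let `G` satisfy condition (C), let `N` be a normal subgroup with the unique-roots
property, let `g ∈ G` have infinite order, and let `n ≥ 1` with `g ^ n ∈ N`. Then the
commensurator of `⟨g⟩` equals the normalizer of `⟨g ^ n⟩`. -/
theorem commensurator_eq_normalizer {G : Type*} [Group G]
    (hC : ∀ g h : G, ¬ IsOfFinOrder h → ∀ k l : ℤ, g * h ^ k * g⁻¹ = h ^ l → |k| = |l|)
    (N : Subgroup G) (hN : N.Normal)
    (hroots : ∀ a ∈ N, ∀ b ∈ N, ∀ t : ℕ, 1 ≤ t → a ^ t = b ^ t → a = b)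
    (g : G) (hg : ¬ IsOfFinOrder g) (n : ℕ) (hn : 1 ≤ n) (hgn : g ^ n ∈ N) :
    {x : G | (((fun y => x * y * x⁻¹) '' (Subgroup.zpowers g : Set G)) ∩
        (Subgroup.zpowers g : Set G)).Infinite}
      = (Subgroup.normalizer (Subgroup.zpowers (g ^ n) : Set G) : Set G) := by
  have hgnfin : ¬ IsOfFinOrder (g ^ n) := by
    intro h
    exact hg (h.of_pow (by omega))
  ext x
  simp only [Set.mem_setOf_eq, SetLike.mem_coe]
  constructor
  · intro hx
    obtain ⟨s, hsmem, hs1⟩ := (hx.diff (Set.finite_singleton 1)).nonempty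
    obtain ⟨⟨y, hy, hys⟩, hsz⟩ := hsmem
    obtain ⟨k, rfl⟩ := hy
    obtain ⟨l, hl⟩ := hsz
    have hys' : x * g ^ k * x⁻¹ = s := hys
    have hl' : g ^ l = s := hl
    have hk0 : k ≠ 0 := by
      rintro rfl
      simp only [zpow_zero, mul_one, mul_inv_cancel] at hys'
      exact hs1 (by simp [← hys'])
    have heq : x * g ^ k * x⁻¹ = g ^ l := hys'.trans hl'.symm
    have habs : |k| = |l| := hC x g hg k l heq
    have hkl : k = l ∨ k = -l := abs_eq_abs.mp habs
    obtain ⟨ε, hε, hεl⟩ : ∃ ε : ℤ, ε * ε = 1 ∧ l = ε * k := by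
      rcases hkl with h | h
      · exact ⟨1, by ring, by omega⟩
      · exact ⟨-1, by ring, by omega⟩
    have hconj : x * g ^ |k| * x⁻¹ = g ^ (ε * |k|) := by
      rcases abs_choice k with h | h
      · rw [h, heq, hεl]
      · rw [h]
        have h4 : ε * -k = -(ε * k) := by ring
        rw [h4, zpow_neg, zpow_neg, ← hεl, ← heq]
        group
    set t : ℕ := k.natAbs with ht
    have htpos : 1 ≤ t := by omega
    have htk : (t : ℤ) = |k| := (Int.abs_eq_natAbs k).symm
    have ha : x * g ^ n * x⁻¹ ∈ N := hN.conj_mem _ hgn x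
    have hb : (g ^ n) ^ ε ∈ N := Subgroup.zpow_mem _ hgn ε
    have hpow : (x * g ^ n * x⁻¹) ^ t = ((g ^ n) ^ ε) ^ t := by
      have lhs : (x * g ^ n * x⁻¹) ^ t = x * g ^ ((n : ℤ) * |k|) * x⁻¹ := by
        rw [conj_pow, ← zpow_natCast (g ^ n) t, ← zpow_natCast g n, ← zpow_mul, htk]
      have rhs : ((g ^ n) ^ ε) ^ t = g ^ (ε * |k| * n) := by
        rw [← zpow_natCast ((g ^ n) ^ ε) t, ← zpow_natCast g n, ← zpow_mul, ← zpow_mul, htk]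
        ring_nf
      rw [lhs, rhs]
      calc x * g ^ ((n : ℤ) * |k|) * x⁻¹ = (x * g ^ |k| * x⁻¹) ^ (n : ℤ) := by
            rw [conj_zpow, ← zpow_mul, mul_comm]
        _ = g ^ (ε * |k| * n) := by rw [hconj, ← zpow_mul]
    have hab : x * g ^ n * x⁻¹ = (g ^ n) ^ ε :=
      hroots _ ha _ hb t htpos hpow
    exact mem_normalizer_of_conj_eq_zpow x (g ^ n) ε hε hab
  · intro hx
    have h1 : x * g ^ n * x⁻¹ ∈ Subgroup.zpowers (g ^ n) :=
      (Subgroup.mem_normalizer_iff.mp hx (g ^ n)).mp (Subgroup.mem_zpowers _)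
    obtain ⟨m, hm⟩ := h1
    have hm' : (g ^ n) ^ m = x * g ^ n * x⁻¹ := hm
    have heq : x * g ^ (n : ℤ) * x⁻¹ = g ^ ((n : ℤ) * m) := by
      rw [zpow_natCast, ← hm', ← zpow_natCast g n, ← zpow_mul]
    have habs : |(n : ℤ)| = |(n : ℤ) * m| := hC x g hg _ _ heq
    have hn' : (0 : ℤ) < n := by exact_mod_cast hn
    have hm1 : m = 1 ∨ m = -1 := by
      have habs' : |(n : ℤ)| = |(n : ℤ)| * |m| := habs.trans (abs_mul _ _)
      have h0 : |(n : ℤ)| ≠ 0 := abs_ne_zero.mpr hn'.ne'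
      have habm : |m| = 1 := mul_left_cancel₀ h0 (by rw [mul_one]; exact habs'.symm)
      exact (abs_eq (by norm_num : (0:ℤ) ≤ 1)).mp habm
    refine Set.infinite_of_injective_forall_mem
      (f := fun j : ℤ => x * (g ^ n) ^ j * x⁻¹) ?_ ?_
    · intro a b hab
      have h2 : (g ^ n) ^ a = (g ^ n) ^ b :=
        mul_left_cancel (mul_right_cancel hab)
      exact injective_zpow_iff_not_isOfFinOrder.mpr hgnfin h2
    · intro j
      constructor
      · refine ⟨(g ^ n) ^ j, ⟨(n : ℤ) * j, ?_⟩, rfl⟩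
        show g ^ ((n : ℤ) * j) = (g ^ n) ^ j
        rw [zpow_mul, zpow_natCast]
      · refine ⟨(n : ℤ) * m * j, ?_⟩
        show g ^ ((n : ℤ) * m * j) = x * (g ^ n) ^ j * x⁻¹
        rw [zpow_mul, zpow_mul, zpow_natCast, hm', conj_zpow]
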